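/- Let $b_1,\ldots,b_m$ be real numbers with $\sum_{i=1}^m b_i = 0$. Then $\left|\sum_{i=1}^m b_i^3\right| \le \frac{m-2}{\sqrt{m(m-1)}}\left(\sum_{i=1}^m b_i^2\right)^{3/2}$. -/

import Mathlib

lemma okumura_aux (m : ℕ) (hm : 2 ≤ m) (b : Fin m → ℝ)
    (hsum : ∑ i, b i = 0) :
    ∑ i, (b i) ^ 3 ≤
      ((m : ℝ) - 2) / Real.sqrt (m * (m - 1)) * (∑ i, (b i) ^ 2) ^ ((3 : ℝ) / 2) := by
  set s : ℝ := ∑ i, (b i) ^ 2 with hs_def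
  have hs : 0 ≤ s := Finset.sum_nonneg fun i _ => sq_nonneg _
  have hm1 : (1 : ℝ) ≤ (m : ℝ) - 1 := by
    have : (2 : ℝ) ≤ (m : ℝ) := by exact_mod_cast hm
    linarith
  have hmm : (0 : ℝ) < (m : ℝ) * ((m : ℝ) - 1) := by nlinarith
  set c : ℝ := Real.sqrt ((m : ℝ) * ((m : ℝ) - 1)) with hc_def
  have hc : 0 < c := Real.sqrt_pos.2 hmm
  have hc2 : c ^ 2 = (m : ℝ) * ((m : ℝ) - 1) := Real.sq_sqrt hmm.le
  set a : ℝ := Real.sqrt s with ha_def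
  have ha : 0 ≤ a := Real.sqrt_nonneg _
  have ha2 : a ^ 2 = s := Real.sq_sqrt hs
  set p : ℝ := ((m : ℝ) - 1) * a / c with hp_def
  set q : ℝ := -a / c with hq_def
  have hp0 : 0 ≤ p := by positivity
  -- each b i ≤ p
  have hb : ∀ i, b i ≤ p := by
    intro i
    have h1 : b i + ∑ j ∈ Finset.univ.erase i, b j = 0 := by
      rw [Finset.add_sum_erase _ b (Finset.mem_univ i)]; exact hsum
    have h2 : (b i) ^ 2 + ∑ j ∈ Finset.univ.erase i, (b j) ^ 2 = s := by
      rw [Finset.add_sum_erase _ (fun j => (b j) ^ 2) (Finset.mem_univ i)]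
    have hcs : (∑ j ∈ Finset.univ.erase i, b j) ^ 2 ≤
        ((m : ℝ) - 1) * ∑ j ∈ Finset.univ.erase i, (b j) ^ 2 := by
      have := sq_sum_le_card_mul_sum_sq (s := Finset.univ.erase i) (f := b)
      have hcard : ((Finset.univ.erase i).card : ℝ) = (m : ℝ) - 1 := by
        rw [Finset.card_erase_of_mem (Finset.mem_univ i), Finset.card_univ,
          Fintype.card_fin]
        have : 1 ≤ m := le_trans (by norm_num) hm
        push_cast [Nat.cast_sub this]
        ring
      calc (∑ j ∈ Finset.univ.erase i, b j) ^ 2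
          ≤ ((Finset.univ.erase i).card : ℝ) * ∑ j ∈ Finset.univ.erase i, (b j) ^ 2 := by
            exact_mod_cast this
        _ = ((m : ℝ) - 1) * ∑ j ∈ Finset.univ.erase i, (b j) ^ 2 := by rw [hcard]
    have hkey : (m : ℝ) * (b i) ^ 2 ≤ ((m : ℝ) - 1) * s := by
      have he : ∑ j ∈ Finset.univ.erase i, b j = -(b i) := by linarith
      rw [he] at hcs
      nlinarith
    -- so (b i)^2 ≤ p^2
    have hp2 : p ^ 2 = ((m : ℝ) - 1) * s / (m : ℝ) := by
      rw [hp_def]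
      rw [div_pow, mul_pow, ha2]
      rw [div_eq_div_iff (by positivity) (by positivity)]
      linear_combination (1 - (m : ℝ)) * s * hc2
    have hb2 : (b i) ^ 2 ≤ p ^ 2 := by
      rw [hp2]
      rw [le_div_iff₀ (by positivity : (0:ℝ) < (m:ℝ))]
      nlinarith
    calc b i ≤ |b i| := le_abs_self _
      _ = Real.sqrt ((b i) ^ 2) := (Real.sqrt_sq_eq_abs _).symm
      _ ≤ Real.sqrt (p ^ 2) := Real.sqrt_le_sqrt hb2
      _ = p := by rw [Real.sqrt_sq hp0]
  -- pointwise cubic bound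
  have hpt : ∀ i, (b i) ^ 3 ≤ (p + 2 * q) * (b i) ^ 2 - (q ^ 2 + 2 * p * q) * b i + p * q ^ 2 := by
    intro i
    nlinarith [mul_nonneg (sub_nonneg.2 (hb i)) (sq_nonneg (b i - q))]
  have hsum3 : ∑ i, (b i) ^ 3 ≤ (p + 2 * q) * s + (m : ℝ) * (p * q ^ 2) := by
    calc ∑ i, (b i) ^ 3
        ≤ ∑ i, ((p + 2 * q) * (b i) ^ 2 - (q ^ 2 + 2 * p * q) * b i + p * q ^ 2) :=
          Finset.sum_le_sum fun i _ => hpt i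
      _ = (p + 2 * q) * s - (q ^ 2 + 2 * p * q) * (∑ i, b i) + (m : ℝ) * (p * q ^ 2) := by
          rw [Finset.sum_add_distrib, Finset.sum_sub_distrib, ← Finset.mul_sum,
            ← Finset.mul_sum, Finset.sum_const, Finset.card_univ, Fintype.card_fin,
            nsmul_eq_mul]
      _ = (p + 2 * q) * s + (m : ℝ) * (p * q ^ 2) := by rw [hsum]; ring
  have h32 : s ^ ((3 : ℝ) / 2) = a ^ 3 := by
    rw [show ((3 : ℝ) / 2) = (1 / 2 : ℝ) * (3 : ℕ) by push_cast; ring,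
      Real.rpow_mul hs, Real.rpow_natCast, ha_def, ← Real.sqrt_eq_rpow]
  rw [h32]
  have heq : (p + 2 * q) * s + (m : ℝ) * (p * q ^ 2) = ((m : ℝ) - 2) / c * a ^ 3 := by
    rw [hp_def, hq_def, ← ha2]
    have hcne : c ≠ 0 := ne_of_gt hc
    field_simp
    linear_combination (-(a ^ 3)) * hc2
  linarith [hsum3, heq.le]

/-- Okumura Lemma (inequality part). -/
theorem okumura_inequality (m : ℕ) (hm : 2 ≤ m) (b : Fin m → ℝ)
    (hsum : ∑ i, b i = 0) :
    |∑ i, (b i) ^ 3| ≤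
      ((m : ℝ) - 2) / Real.sqrt (m * (m - 1)) * (∑ i, (b i) ^ 2) ^ ((3 : ℝ) / 2) := by
  rw [abs_le]
  constructor
  · have h := okumura_aux m hm (fun i => -(b i)) (by simpa using hsum)
    have h3 : ∑ i, (-(b i)) ^ 3 = -∑ i, (b i) ^ 3 := by
      rw [← Finset.sum_neg_distrib]
      exact Finset.sum_congr rfl fun i _ => by ring
    have h2 : ∑ i, (-(b i)) ^ 2 = ∑ i, (b i) ^ 2 := by
      exact Finset.sum_congr rfl fun i _ => by ring
    rw [h3, h2] at h
    linarith
  · exact okumura_aux m hm b hsum
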